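/- Let Ĥ be a real-valued function defined on all finite sequences (a₁,…,aₙ) of nonnegative real numbers with a₁+…+aₙ > 0. Assume: (1) Ĥ is homogeneous, i.e. Ĥ(c·a₁,…,c·aₙ) = c·Ĥ(a₁,…,aₙ) for all c > 0; (2) Ĥ is symmetric, i.e. invariant under permutations of its arguments; (3) Ĥ satisfies the 2-cocycle equation: for any finite sequences (a₁,…,a_k), (b₁,…,b_l), …, (c₁,…,c_m) of nonnegative reals each with positive sum, Ĥ(a₁,…,a_k, b₁,…,b_l, …, c₁,…,c_m) = Ĥ(a₁+…+a_k, b₁+…+b_l, …, c₁+…+c_m) + Ĥ(a₁,…,a_k) + Ĥ(b₁,…,b_l) + … + Ĥ(c₁,…,c_m); (4) Ĥ is continuous (as a function of its arguments, for each fixed number of arguments); (5) Ĥ(1,1) = 2. Then Ĥ(a₁,…,aₙ) = u(a₁) + … + u(aₙ) − u(a₁+…+aₙ), where u(x) = x·log₂(1/x) for x > 0 and u(0) = 0. -/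

import Mathlib

open Filter Topology


lemma list_sum_map_add (L : List ℝ) (f g : ℝ → ℝ) :
    (L.map (fun x => f x + g x)).sum = (L.map f).sum + (L.map g).sum := by
  induction L with
  | nil => simp
  | cons a t ih => simp [ih]; ring

lemma list_sum_map_sub' {α : Type*} (L : List α) (f g : α → ℝ) :
    (L.map (fun x => f x - g x)).sum = (L.map f).sum - (L.map g).sum := by
  induction L with
  | nil => simp
  | cons a t ih => simp [ih]; ring

lemma flatten_replicate (b a : ℕ) (x : ℝ) :
    (List.replicate b (List.replicate a x)).flatten = List.replicate (b * a) x := by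
  induction b with
  | zero => simp
  | succ b ih =>
    rw [List.replicate_succ, List.flatten_cons, ih, Nat.succ_mul, Nat.add_comm,
      List.replicate_add]

lemma flatten_map_replicate (k : List ℕ) :
    ((k.map (fun a => List.replicate a (1:ℝ))).flatten) = List.replicate k.sum (1:ℝ) := by
  induction k with
  | nil => simp
  | cons a t ih =>
    rw [List.map_cons, List.flatten_cons, ih, List.sum_cons, List.replicate_add]

lemma ofFn_pair (a b : ℝ) : List.ofFn ![a, b] = [a, b] := by
  simp [List.ofFn_succ]

noncomputable def FF (L : List ℝ) : ℝ :=
  ((L.map Real.negMulLog).sum - Real.negMulLog L.sum) / Real.log 2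

lemma FF_hom (c : ℝ) (L : List ℝ) : FF (L.map (fun x => c * x)) = c * FF L := by
  unfold FF
  have h1 : ((L.map (fun x => c * x)).map Real.negMulLog).sum
      = L.sum * Real.negMulLog c + c * (L.map Real.negMulLog).sum := by
    rw [List.map_map]
    have : (Real.negMulLog ∘ fun x => c * x)
        = fun x => x * Real.negMulLog c + c * Real.negMulLog x := by
      funext x; simp [Function.comp, Real.negMulLog_mul c x]
    rw [this, list_sum_map_add]
    congr 1
    · simpa using List.sum_map_mul_right L id (Real.negMulLog c)
    · exact List.sum_map_mul_left L Real.negMulLog c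
  have h2 : (L.map (fun x => c * x)).sum = c * L.sum := by
    simpa using List.sum_map_mul_left L id c
  rw [h1, h2, Real.negMulLog_mul c L.sum]
  ring

lemma FF_perm (L M : List ℝ) (h : L.Perm M) : FF L = FF M := by
  unfold FF
  rw [(h.map Real.negMulLog).sum_eq, h.sum_eq]

lemma FF_cocycle (P : List (List ℝ)) :
    FF P.flatten = FF (P.map List.sum) + (P.map FF).sum := by
  unfold FF
  have h1 : (P.flatten.map Real.negMulLog).sum
      = (P.map (fun B => (B.map Real.negMulLog).sum)).sum := by
    rw [List.map_flatten, List.sum_flatten, List.map_map]; rfl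
  have h2 : P.flatten.sum = (P.map List.sum).sum := List.sum_flatten
  have h3 : ((P.map List.sum).map Real.negMulLog).sum
      = (P.map (fun B => Real.negMulLog B.sum)).sum := by
    rw [List.map_map]; rfl
  have h4 : (P.map (fun B => ((B.map Real.negMulLog).sum - Real.negMulLog B.sum) / Real.log 2)).sum
      = ((P.map (fun B => (B.map Real.negMulLog).sum)).sum
          - (P.map (fun B => Real.negMulLog B.sum)).sum) / Real.log 2 := by
    simp only [div_eq_mul_inv]
    rw [List.sum_map_mul_right, list_sum_map_sub']
  rw [h1, h2, h3, h4]
  ring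

lemma FF_cont (n : ℕ) : Continuous (fun v : Fin n → ℝ => FF (List.ofFn v)) := by
  have heq : (fun v : Fin n → ℝ => FF (List.ofFn v))
      = fun v : Fin n → ℝ =>
        ((∑ i, Real.negMulLog (v i)) - Real.negMulLog (∑ i, v i)) / Real.log 2 := by
    funext v
    unfold FF
    rw [List.map_ofFn, List.sum_ofFn, List.sum_ofFn]
    rfl
  rw [heq]
  fun_prop

lemma FF_norm : FF [1, 1] = 2 := by
  have hlog : Real.log 2 ≠ 0 := ne_of_gt (Real.log_pos one_lt_two)
  unfold FF
  simp [Real.negMulLog]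
  field_simp
  ring

lemma FF_eq_target (L : List ℝ) :
    (L.map (fun x => x * Real.logb 2 (1 / x))).sum - L.sum * Real.logb 2 (1 / L.sum)
      = FF L := by
  have hx : ∀ x : ℝ, x * Real.logb 2 (1 / x) = Real.negMulLog x * (Real.log 2)⁻¹ := by
    intro x
    rw [Real.logb, one_div, Real.log_inv, Real.negMulLog]
    ring
  have h1 : (L.map (fun x => x * Real.logb 2 (1 / x))).sum
      = (L.map Real.negMulLog).sum * (Real.log 2)⁻¹ := by
    have : (fun x => x * Real.logb 2 (1 / x))
        = fun x => Real.negMulLog x * (Real.log 2)⁻¹ := funext hx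
    rw [this, List.sum_map_mul_right]
  rw [h1, hx L.sum]
  unfold FF
  ring


theorem faddeev_lemma (f : ℕ → ℝ) (h1 : f 1 = 0) (h2 : f 2 = 0)
    (hadd : ∀ a b : ℕ, 1 ≤ a → 1 ≤ b → f (a * b) = f a + f b)
    (hd : Tendsto (fun n => f (n + 1) - f n) atTop (𝓝 0)) :
    ∀ m : ℕ, 1 ≤ m → f m = 0 := by
  have hpow : ∀ m : ℕ, 1 ≤ m → ∀ k : ℕ, 1 ≤ k → f (m ^ k) = k * f m := by
    intro m hm k hk
    induction k with
    | zero => omega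
    | succ k ih =>
      rcases Nat.eq_or_lt_of_le hk with h | h
      · simp [← h]
      · have hk1 : 1 ≤ k := by omega
        have : f (m ^ (k+1)) = f (m ^ k) + f m := by
          rw [pow_succ]
          exact hadd _ _ (Nat.one_le_pow _ _ hm) hm
        rw [this, ih hk1]; push_cast; ring
  intro m hm
  -- main estimate
  have key : ∀ ε : ℝ, 0 < ε → ∃ C : ℝ, 0 ≤ C ∧ ∀ n : ℕ, 1 ≤ n →
      |f n| ≤ C + ε * (Nat.log 2 n) := by
    intro ε hε
    obtain ⟨N₀, hN₀⟩ := Metric.tendsto_atTop.mp hd ε hε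
    set N := max N₀ 1 with hN
    have hN1 : 1 ≤ N := le_max_right _ _
    have hNd : ∀ n, N ≤ n → |f (n+1) - f n| ≤ ε := by
      intro n hn
      have := hN₀ n (le_trans (le_max_left _ _) hn)
      rw [Real.dist_eq, sub_zero] at this
      exact this.le
    refine ⟨∑ j ∈ Finset.range (2 * N), |f j|, Finset.sum_nonneg fun j _ => abs_nonneg _, ?_⟩
    set C := ∑ j ∈ Finset.range (2 * N), |f j| with hC
    have hCle : ∀ j, j < 2 * N → |f j| ≤ C :=
      fun j hj => Finset.single_le_sum (f := fun j => |f j|) (fun i _ => abs_nonneg _)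
        (Finset.mem_range.mpr hj)
    intro n
    induction n using Nat.strong_induction_on with
    | _ n ih =>
      intro hn1
      by_cases hsmall : n < 2 * N
      · exact le_add_of_le_of_nonneg (hCle n hsmall)
          (mul_nonneg hε.le (Nat.cast_nonneg _))
      · push_neg at hsmall
        have hn2 : 2 ≤ n := by omega
        set j := n / 2 with hj
        have hjN : N ≤ j := by omega
        have hj1 : 1 ≤ j := by omega
        have hjn : j < n := by omega
        have hlog : Nat.log 2 j + 1 = Nat.log 2 n := by
          rw [hj, Nat.log_div_base]
          have : 1 ≤ Nat.log 2 n := Nat.le_log_of_pow_le (by norm_num) (by omega)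
          omega
        have hstep : |f n| ≤ |f j| + ε := by
          rcases Nat.even_or_odd n with he | ho
          · obtain ⟨t, ht⟩ := he
            have hteq : n = 2 * j := by omega
            have : f n = f j := by rw [hteq, hadd 2 j (by norm_num) hj1, h2]; ring
            rw [this]; linarith
          · obtain ⟨t, ht⟩ := ho
            have hteq : n = 2 * j + 1 := by omega
            have h2j : f (2 * j) = f j := by
              rw [hadd 2 j (by norm_num) hj1, h2]; ring
            have hdiff : |f (2 * j + 1) - f (2 * j)| ≤ ε := hNd (2 * j) (by omega)
            calc |f n| = |(f (2*j+1) - f (2*j)) + f j| := by rw [hteq, h2j]; ring_nf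
              _ ≤ |f (2*j+1) - f (2*j)| + |f j| := abs_add_le _ _
              _ ≤ |f j| + ε := by linarith
        calc |f n| ≤ |f j| + ε := hstep
          _ ≤ (C + ε * (Nat.log 2 j)) + ε := by linarith [ih j hjn hj1]
          _ = C + ε * (Nat.log 2 j + 1) := by ring
          _ = C + ε * (Nat.log 2 n) := by rw_mod_cast [hlog]
  -- conclude
  set L : ℝ := ((Nat.log 2 m + 1 : ℕ) : ℝ) with hL
  have hLpos : (0:ℝ) < L := by positivity
  have habs : ∀ ε : ℝ, 0 < ε → |f m| ≤ ε * L := by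
    intro ε hε
    obtain ⟨C, hC0, hC⟩ := key ε hε
    have hbound : ∀ k : ℕ, 1 ≤ k → |f m| ≤ C / k + ε * L := by
      intro k hk
      have hmk : 1 ≤ m ^ k := Nat.one_le_pow _ _ hm
      have h1' : |f (m ^ k)| ≤ C + ε * (Nat.log 2 (m ^ k)) := hC _ hmk
      have hlogle : (Nat.log 2 (m ^ k) : ℝ) ≤ k * L := by
        have hmlt : m ^ k < 2 ^ (k * (Nat.log 2 m + 1)) := by
          calc m ^ k < (2 ^ (Nat.log 2 m + 1)) ^ k :=
                Nat.pow_lt_pow_left (Nat.lt_pow_succ_log_self (by norm_num) m) (by omega)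
            _ = 2 ^ ((Nat.log 2 m + 1) * k) := by rw [← pow_mul]
            _ = 2 ^ (k * (Nat.log 2 m + 1)) := by rw [Nat.mul_comm]
        have := Nat.log_lt_of_lt_pow (by positivity) hmlt
        rw [hL]; push_cast
        have : (Nat.log 2 (m ^ k) : ℝ) < k * ((Nat.log 2 m : ℝ) + 1) := by exact_mod_cast this
        linarith
      have hfmk : f (m ^ k) = k * f m := hpow m hm k hk
      have hkpos : (0:ℝ) < k := by exact_mod_cast hk
      have : (k:ℝ) * |f m| ≤ C + ε * (k * L) := by
        calc (k:ℝ) * |f m| = |f (m ^ k)| := by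
              rw [hfmk, abs_mul, abs_of_pos hkpos]
          _ ≤ C + ε * (Nat.log 2 (m ^ k)) := h1'
          _ ≤ C + ε * (k * L) := by nlinarith
      rw [div_add' _ _ _ hkpos.ne', le_div_iff₀ hkpos]
      nlinarith
    have htend : Tendsto (fun k : ℕ => C / k + ε * L) atTop (𝓝 (ε * L)) := by
      have := tendsto_natCast_atTop_atTop (R := ℝ)
      have h0 : Tendsto (fun k : ℕ => C / k) atTop (𝓝 0) :=
        Tendsto.div_atTop tendsto_const_nhds this
      simpa using h0.add tendsto_const_nhds
    exact ge_of_tendsto htend (eventually_atTop.mpr ⟨1, fun k hk => hbound k hk⟩)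
  have : |f m| ≤ 0 := by
    refine le_of_forall_pos_le_add ?_
    intro ε hε
    have := habs (ε / L) (by positivity)
    rw [div_mul_cancel₀ _ hLpos.ne'] at this
    linarith
  have := abs_nonneg (f m)
  have : |f m| = 0 := le_antisymm ‹|f m| ≤ 0› (abs_nonneg _)
  exact abs_eq_zero.mp this


set_option maxHeartbeats 1000000 in
theorem entropy_aux (D : List ℝ → ℝ)
    (h_hom : ∀ c : ℝ, 0 < c → ∀ L : List ℝ, (∀ x ∈ L, 0 ≤ x) → 0 < L.sum →
      D (L.map (fun x => c * x)) = c * D L)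
    (h_cocycle : ∀ P : List (List ℝ),
      (∀ B ∈ P, (∀ x ∈ B, 0 ≤ x) ∧ 0 < B.sum) →
      D P.flatten = D (P.map List.sum) + (P.map D).sum)
    (h_cont : ∀ n : ℕ, ContinuousOn (fun v : Fin n → ℝ => D (List.ofFn v))
      {v : Fin n → ℝ | (∀ i, 0 ≤ v i) ∧ 0 < ∑ i, v i})
    (h_norm : D [1, 1] = 0) :
    ∀ L : List ℝ, (∀ x ∈ L, 0 ≤ x) → 0 < L.sum → D L = 0 := by
  -- replicate facts
  have hrep_nonneg : ∀ n : ℕ, ∀ x ∈ List.replicate n (1:ℝ), 0 ≤ x := by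
    intro n x hx
    rw [List.eq_of_mem_replicate hx]; norm_num
  have hrep_sum : ∀ n : ℕ, (List.replicate n (1:ℝ)).sum = n := by
    intro n; simp [List.sum_replicate]
  have hrep_ok : ∀ n : ℕ, 1 ≤ n →
      (∀ x ∈ List.replicate n (1:ℝ), 0 ≤ x) ∧ 0 < (List.replicate n (1:ℝ)).sum := by
    intro n hn
    exact ⟨hrep_nonneg n, by rw [hrep_sum]; exact_mod_cast hn⟩
  -- single block: D [s] = 0
  have hsingle : ∀ B : List ℝ, (∀ x ∈ B, 0 ≤ x) → 0 < B.sum → D [B.sum] = 0 := by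
    intro B h1 h2
    have := h_cocycle [B] (by intro B' hB'; simp at hB'; subst hB'; exact ⟨h1, h2⟩)
    simp at this
    linarith
  set g : ℕ → ℝ := fun n => D (List.replicate n 1) with hg
  have g1 : g 1 = 0 := by
    have := hsingle [(1:ℝ)] (by norm_num) (by norm_num)
    simpa [hg] using this
  have g2 : g 2 = 0 := by
    show D (List.replicate 2 1) = 0
    have : List.replicate 2 (1:ℝ) = [1, 1] := rfl
    rw [this, h_norm]
  -- two-block cocycle
  have two_block : ∀ A B : List ℝ, ((∀ x ∈ A, 0 ≤ x) ∧ 0 < A.sum) →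
      ((∀ x ∈ B, 0 ≤ x) ∧ 0 < B.sum) →
      D (A ++ B) = D [A.sum, B.sum] + D A + D B := by
    intro A B hA hB
    have := h_cocycle [A, B] (by
      intro B' hB'; simp at hB'
      rcases hB' with h | h <;> subst h <;> [exact hA; exact hB])
    simp at this
    rw [this]; ring
  -- g is additive with defect D [a, b]
  have gadd : ∀ a b : ℕ, 1 ≤ a → 1 ≤ b →
      g (a + b) = D [(a:ℝ), (b:ℝ)] + g a + g b := by
    intro a b ha hb
    have := two_block (List.replicate a 1) (List.replicate b 1) (hrep_ok a ha) (hrep_ok b hb)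
    rw [← List.replicate_add, hrep_sum, hrep_sum] at this
    exact this
  -- D (replicate b (a:ℝ)) = a * g b
  have hDrepl : ∀ a b : ℕ, 1 ≤ a → 1 ≤ b → D (List.replicate b ((a:ℕ):ℝ)) = (a:ℝ) * g b := by
    intro a b ha hb
    have hc : (0:ℝ) < a := by exact_mod_cast ha
    have := h_hom a hc (List.replicate b 1) (hrep_nonneg b) ((hrep_ok b hb).2)
    rw [List.map_replicate, mul_one] at this
    exact this
  -- multiplicativity
  have gmul : ∀ a b : ℕ, 1 ≤ a → 1 ≤ b →
      g (a * b) = (a:ℝ) * g b + (b:ℝ) * g a := by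
    intro a b ha hb
    have hP := h_cocycle (List.replicate b (List.replicate a (1:ℝ))) (by
      intro B hB
      rw [List.eq_of_mem_replicate hB]
      exact hrep_ok a ha)
    rw [flatten_replicate, List.map_replicate, List.map_replicate, hrep_sum,
      List.sum_replicate] at hP
    have hP' : g (b * a) = D (List.replicate b ((a:ℕ):ℝ)) + (b:ℝ) * g a := by
      rw [hg]
      convert hP using 2
      · simp
    rw [hDrepl a b ha hb] at hP'
    rw [Nat.mul_comm a b, hP']
  
  -- f = g n / n
  set f : ℕ → ℝ := fun n => g n / n with hf
  have fmul : ∀ a b : ℕ, 1 ≤ a → 1 ≤ b → f (a * b) = f a + f b := by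
    intro a b ha hb
    have hA : (0:ℝ) < a := by exact_mod_cast ha
    have hB : (0:ℝ) < b := by exact_mod_cast hb
    rw [hf]
    simp only
    rw [gmul a b ha hb]
    push_cast
    field_simp
    ring
  have f2 : f 2 = 0 := by rw [hf]; simp [g2]
  -- the boundary function h
  set S2 : Set (Fin 2 → ℝ) := {v : Fin 2 → ℝ | (∀ i, 0 ≤ v i) ∧ 0 < ∑ i, v i} with hS2
  set h : ℝ → ℝ := fun p => D [p, 1 - p] with hh
  set E : ℕ → ℝ := fun n => h ((n:ℝ) / (n + 1)) with hE
  -- E tends to h 1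
  have hq_nonneg : ∀ n : ℕ, 0 ≤ (n:ℝ) / (n + 1) := by
    intro n; positivity
  have hq_le : ∀ n : ℕ, (n:ℝ) / (n + 1) ≤ 1 := by
    intro n
    rw [div_le_one (by positivity)]
    linarith [Nat.cast_nonneg (α := ℝ) n]
  have hEtendsto : Tendsto E atTop (𝓝 (h 1)) := by
    have hx₀ : (![1, 0] : Fin 2 → ℝ) ∈ S2 := by
      constructor
      · intro i; fin_cases i <;> norm_num
      · simp [Fin.sum_univ_two]
    have cw : ContinuousWithinAt (fun v : Fin 2 → ℝ => D (List.ofFn v)) S2 ![1, 0] :=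
      h_cont 2 _ hx₀
    set p : ℕ → (Fin 2 → ℝ) := fun n => ![(n:ℝ) / (n + 1), 1 - (n:ℝ) / (n + 1)] with hp
    have hmem : ∀ n, p n ∈ S2 := by
      intro n
      constructor
      · intro i
        have h0 : p n 0 = (n:ℝ) / (n + 1) := by simp [hp]
        have h1 : p n 1 = 1 - (n:ℝ) / (n + 1) := by simp [hp]
        fin_cases i
        · rw [show (⟨0, by norm_num⟩ : Fin 2) = 0 from rfl, h0]; exact hq_nonneg n
        · rw [show (⟨1, by norm_num⟩ : Fin 2) = 1 from rfl, h1]; linarith [hq_le n]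
      · simp [hp, Fin.sum_univ_two]
    have htend : Tendsto p atTop (𝓝 (![1, 0] : Fin 2 → ℝ)) := by
      rw [tendsto_pi_nhds]
      intro i
      have hbase : Tendsto (fun n : ℕ => (n:ℝ) / (n + 1)) atTop (𝓝 1) :=
        tendsto_natCast_div_add_atTop 1
      fin_cases i
      · simpa [hp] using hbase
      · simp only [hp]
        have : Tendsto (fun n : ℕ => 1 - (n:ℝ) / (n + 1)) atTop (𝓝 (1 - 1)) :=
          tendsto_const_nhds.sub hbase
        simpa using this
    have : Tendsto (fun n => D (List.ofFn (p n))) atTop (𝓝 (D (List.ofFn (![1, 0] : Fin 2 → ℝ)))) := by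
      apply cw.tendsto.comp
      rw [tendsto_nhdsWithin_iff]
      exact ⟨htend, Eventually.of_forall hmem⟩
    have heq1 : ∀ n, D (List.ofFn (p n)) = E n := by
      intro n
      rw [hE, hh]
      simp only [hp, ofFn_pair]
    have heq2 : D (List.ofFn (![1, 0] : Fin 2 → ℝ)) = h 1 := by
      rw [hh]
      simp only [ofFn_pair]
      norm_num
    rw [← heq2]
    exact this.congr heq1
  -- the increment identity
  have hgE : ∀ n : ℕ, 1 ≤ n → g (n + 1) - g n = ((n:ℝ) + 1) * E n := by
    intro n hn
    have hstep : g (n + 1) = D [(n:ℝ), 1] + g n := by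
      have := gadd n 1 hn le_rfl
      rw [this, g1]
      push_cast
      ring
    have hDn1 : D [(n:ℝ), 1] = ((n:ℝ) + 1) * E n := by
      have hnpos : (0:ℝ) < (n:ℝ) + 1 := by positivity
      have hL : ∀ x ∈ [(n:ℝ) / (n + 1), 1 / ((n:ℝ) + 1)], 0 ≤ x := by
        intro x hx
        simp at hx
        rcases hx with h | h <;> subst h
        · exact hq_nonneg n
        · positivity
      have hLsum : (0:ℝ) < [(n:ℝ) / (n + 1), 1 / ((n:ℝ) + 1)].sum := by
        simp only [List.sum_cons, List.sum_nil, add_zero]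
        positivity
      have := h_hom ((n:ℝ) + 1) hnpos _ hL hLsum
      have hmap : [(n:ℝ) / (n + 1), 1 / ((n:ℝ) + 1)].map (fun x => ((n:ℝ) + 1) * x)
          = [(n:ℝ), 1] := by
        simp only [List.map_cons, List.map_nil]
        congr 1
        · field_simp
        · congr 1
          field_simp
      rw [hmap] at this
      have hEn : E n = D [(n:ℝ) / (n + 1), 1 / ((n:ℝ) + 1)] := by
        have h15 : 1 - (n:ℝ) / (n + 1) = 1 / ((n:ℝ) + 1) := by field_simp; ring
        simp only [hE, hh, h15]
      rw [this, hEn]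
    rw [hstep, hDn1]
    ring
  
  -- helper limit
  have tendsto_lin : ∀ a b : ℝ, Tendsto (fun n : ℕ => (a * n + b) / n) atTop (𝓝 a) := by
    intro a b
    have h1 : Tendsto (fun n : ℕ => a + b * (1 / n)) atTop (𝓝 (a + b * 0)) :=
      tendsto_const_nhds.add (tendsto_const_nhds.mul tendsto_one_div_atTop_nhds_zero_nat)
    rw [mul_zero, add_zero] at h1
    apply h1.congr'
    filter_upwards [eventually_ge_atTop 1] with n hn
    have hn' : (0:ℝ) < n := by exact_mod_cast hn
    field_simp
  have gdouble : ∀ m : ℕ, 1 ≤ m → g (2 * m) = 2 * g m := by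
    intro m hm
    have := gmul 2 m (by norm_num) hm
    rw [this, g2]
    push_cast
    ring
  -- c₀ = h 1 is zero
  set c₀ := h 1 with hc₀def
  have hc₀ : c₀ = 0 := by
    have hid : ∀ n : ℕ, 1 ≤ n →
        ((2 * (n:ℝ) + 2) / n) * E (2 * n + 1) + ((2 * (n:ℝ) + 1) / n) * E (2 * n)
          = ((2 * (n:ℝ) + 2) / n) * E n := by
      intro n hn
      have hn' : (0:ℝ) < n := by exact_mod_cast hn
      have e1 := hgE (2 * n + 1) (by omega)
      have e2 := hgE (2 * n) (by omega)
      have e3 := hgE n hn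
      have d1 := gdouble n hn
      have d2 := gdouble (n + 1) (by omega)
      have hx1 : 2 * n + 1 + 1 = 2 * (n + 1) := by ring
      rw [hx1] at e1
      push_cast at e1 e2 e3
      have key : (2 * (n:ℝ) + 2) * E (2 * n + 1) + (2 * (n:ℝ) + 1) * E (2 * n)
          = (2 * (n:ℝ) + 2) * E n := by
        have : g (2 * (n + 1)) - g (2 * n) = 2 * (g (n + 1) - g n) := by
          rw [d1, d2]; ring
        nlinarith [e1, e2, e3, this]
      field_simp
      nlinarith [key]
    have hsub1 : Tendsto (fun n : ℕ => E (2 * n + 1)) atTop (𝓝 c₀) :=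
      hEtendsto.comp (tendsto_atTop_mono (fun n => by simp only [id_eq]; omega) tendsto_id)
    have hsub2 : Tendsto (fun n : ℕ => E (2 * n)) atTop (𝓝 c₀) :=
      hEtendsto.comp (tendsto_atTop_mono (fun n => by simp only [id_eq]; omega) tendsto_id)
    have hco1 : Tendsto (fun n : ℕ => (2 * (n:ℝ) + 2) / n) atTop (𝓝 2) := tendsto_lin 2 2
    have hco2 : Tendsto (fun n : ℕ => (2 * (n:ℝ) + 1) / n) atTop (𝓝 2) := tendsto_lin 2 1
    have hL : Tendsto (fun n : ℕ =>
        ((2 * (n:ℝ) + 2) / n) * E (2 * n + 1) + ((2 * (n:ℝ) + 1) / n) * E (2 * n))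
        atTop (𝓝 (2 * c₀ + 2 * c₀)) := (hco1.mul hsub1).add (hco2.mul hsub2)
    have hR : Tendsto (fun n : ℕ => ((2 * (n:ℝ) + 2) / n) * E n) atTop (𝓝 (2 * c₀)) :=
      hco1.mul hEtendsto
    have hL' : Tendsto (fun n : ℕ => ((2 * (n:ℝ) + 2) / n) * E n)
        atTop (𝓝 (2 * c₀ + 2 * c₀)) := by
      apply hL.congr'
      filter_upwards [eventually_ge_atTop 1] with n hn
      exact hid n hn
    have := tendsto_nhds_unique hL' hR
    linarith
  have hE0 : Tendsto E atTop (𝓝 0) := by rw [← hc₀]; exact hEtendsto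
  -- telescoping sum for g
  have gsum : ∀ n : ℕ, 1 ≤ n → g n = ∑ k ∈ Finset.Ico 1 n, ((k:ℝ) + 1) * E k := by
    intro n hn
    induction n, hn using Nat.le_induction with
    | base => simp [g1]
    | succ n hn ih =>
      rw [Finset.sum_Ico_succ_top hn, ← ih]
      have := hgE n hn
      linarith
  have gbound : ∀ n : ℕ, 1 ≤ n → |g n| ≤ n * ∑ k ∈ Finset.range n, |E k| := by
    intro n hn
    rw [gsum n hn]
    calc |∑ k ∈ Finset.Ico 1 n, ((k:ℝ) + 1) * E k|
        ≤ ∑ k ∈ Finset.Ico 1 n, |((k:ℝ) + 1) * E k| := Finset.abs_sum_le_sum_abs _ _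
      _ ≤ ∑ k ∈ Finset.Ico 1 n, (n:ℝ) * |E k| := by
          apply Finset.sum_le_sum
          intro k hk
          rw [Finset.mem_Ico] at hk
          rw [abs_mul]
          apply mul_le_mul_of_nonneg_right _ (abs_nonneg _)
          rw [abs_of_pos (by positivity : (0:ℝ) < (k:ℝ) + 1)]
          have : (k:ℝ) + 1 ≤ n := by
            have : k + 1 ≤ n := hk.2
            exact_mod_cast this
          linarith
      _ ≤ ∑ k ∈ Finset.range n, (n:ℝ) * |E k| := by
          apply Finset.sum_le_sum_of_subset_of_nonneg
          · intro k hk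
            rw [Finset.mem_Ico] at hk
            exact Finset.mem_range.mpr hk.2
          · intro k _ _
            positivity
      _ = n * ∑ k ∈ Finset.range n, |E k| := by rw [Finset.mul_sum]
  have cesaro : Tendsto (fun n : ℕ => (∑ k ∈ Finset.range n, |E k|) / n) atTop (𝓝 0) := by
    have habs : Tendsto (fun k => |E k|) atTop (𝓝 0) := by
      have := hE0.abs
      simpa using this
    have := habs.cesaro
    simpa [smul_eq_mul, div_eq_inv_mul] using this
  have hgsq : Tendsto (fun n : ℕ => g n / (n:ℝ) ^ 2) atTop (𝓝 0) := by
    apply squeeze_zero_norm' (a := fun n : ℕ => (∑ k ∈ Finset.range n, |E k|) / n) ?_ cesaro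
    filter_upwards [eventually_ge_atTop 1] with n hn
    have hn' : (0:ℝ) < n := by exact_mod_cast hn
    rw [Real.norm_eq_abs, abs_div, abs_of_pos (by positivity : (0:ℝ) < (n:ℝ)^2)]
    rw [div_le_div_iff₀ (by positivity) hn']
    calc |g n| * n ≤ (n * ∑ k ∈ Finset.range n, |E k|) * n := by
          have := gbound n hn
          nlinarith [abs_nonneg (g n), Finset.sum_nonneg (fun k (_ : k ∈ Finset.range n) => abs_nonneg (E k))]
      _ = (∑ k ∈ Finset.range n, |E k|) * (n:ℝ)^2 := by ring
  -- difference of f tends to 0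
  have hd : Tendsto (fun n : ℕ => f (n + 1) - f n) atTop (𝓝 0) := by
    have heq : ∀ n : ℕ, 1 ≤ n →
        f (n + 1) - f n = E n - (g n / (n:ℝ)^2) * ((n:ℝ) / (n + 1)) := by
      intro n hn
      have hn' : (0:ℝ) < n := by exact_mod_cast hn
      have hstep := hgE n hn
      rw [hf]
      simp only
      push_cast
      have hgn1 : g (n + 1) = g n + ((n:ℝ) + 1) * E n := by linarith
      rw [hgn1]
      field_simp
      ring
    have hlim : Tendsto (fun n : ℕ => E n - (g n / (n:ℝ)^2) * ((n:ℝ) / (n + 1)))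
        atTop (𝓝 (0 - 0 * 1)) := by
      exact hE0.sub ((hgsq.mul (tendsto_natCast_div_add_atTop 1)))
    rw [show (0:ℝ) - 0 * 1 = 0 by ring] at hlim
    apply hlim.congr'
    filter_upwards [eventually_ge_atTop 1] with n hn
    exact (heq n hn).symm
  have hf1 : f 1 = 0 := by rw [hf]; simp [g1]
  have ffin : ∀ m : ℕ, 1 ≤ m → f m = 0 := faddeev_lemma f hf1 f2 fmul hd
  have hg0 : ∀ n : ℕ, 1 ≤ n → g n = 0 := by
    intro n hn
    have hn' : (0:ℝ) < n := by exact_mod_cast hn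
    have := ffin n hn
    rw [hf] at this
    simp only at this
    field_simp at this
    simpa using this
  
  -- D vanishes on lists of positive integers
  have hDnat : ∀ k : List ℕ, k ≠ [] → (∀ a ∈ k, 1 ≤ a) →
      D (k.map (fun a => ((a:ℕ):ℝ))) = 0 := by
    intro k hne hpos
    have hsum1 : 1 ≤ k.sum := by
      rcases k with _ | ⟨a, t⟩
      · simp at hne
      · have h1 : 1 ≤ a := hpos a (by simp)
        simp only [List.sum_cons]
        omega
    have hP := h_cocycle (k.map (fun a => List.replicate a (1:ℝ))) (by
      intro B hB
      rw [List.mem_map] at hB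
      obtain ⟨a, ha, rfl⟩ := hB
      exact hrep_ok a (hpos a ha))
    rw [flatten_map_replicate] at hP
    have hms : (k.map (fun a => List.replicate a (1:ℝ))).map List.sum
        = k.map (fun a => ((a:ℕ):ℝ)) := by
      rw [List.map_map]
      congr 1
      funext a
      simp [hrep_sum]
    have hmD : ((k.map (fun a => List.replicate a (1:ℝ))).map D).sum = 0 := by
      rw [List.map_map]
      apply List.sum_eq_zero
      intro y hy
      rw [List.mem_map] at hy
      obtain ⟨a, ha, rfl⟩ := hy
      exact hg0 a (hpos a ha)
    rw [hms, hmD] at hP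
    have h0 : D (List.replicate k.sum (1:ℝ)) = 0 := hg0 k.sum hsum1
    rw [h0] at hP
    linarith
  -- D vanishes on positive rational vectors
  have hDq : ∀ n : ℕ, 1 ≤ n → ∀ kk : Fin n → ℕ, (∀ i, 1 ≤ kk i) → ∀ M : ℕ, 1 ≤ M →
      D (List.ofFn (fun i => (kk i : ℝ) / ((M:ℕ):ℝ))) = 0 := by
    intro n hn kk hkk M hM
    have hMpos : (0:ℝ) < M := by exact_mod_cast hM
    set L := List.ofFn (fun i => (kk i : ℝ) / ((M:ℕ):ℝ)) with hL
    have hnn : ∀ y ∈ L, 0 ≤ y := by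
      intro y hy
      rw [hL, List.mem_ofFn] at hy
      obtain ⟨i, rfl⟩ := hy
      positivity
    have hsum : 0 < L.sum := by
      rw [hL, List.sum_ofFn]
      apply Finset.sum_pos
      · intro i _
        have h1 : (1:ℝ) ≤ kk i := by exact_mod_cast hkk i
        positivity
      · have : Nonempty (Fin n) := Fin.pos_iff_nonempty.mp (by omega)
        exact Finset.univ_nonempty
    have hmap : L.map (fun y => (M:ℝ) * y) = (List.ofFn kk).map (fun a => ((a:ℕ):ℝ)) := by
      rw [hL, List.map_ofFn, List.map_ofFn]
      congr 1
      funext i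
      simp only [Function.comp]
      field_simp
    have hh2 := h_hom M hMpos L hnn hsum
    rw [hmap] at hh2
    have hz := hDnat (List.ofFn kk) (by
        intro hc
        have := congrArg List.length hc
        simp at this
        omega) (by
        intro a ha
        rw [List.mem_ofFn] at ha
        obtain ⟨i, rfl⟩ := ha
        exact hkk i)
    rw [hz] at hh2
    exact (mul_eq_zero.mp hh2.symm).resolve_left hMpos.ne'
  -- density argument
  intro L hLnn hLsum
  set n := L.length with hn
  have hnpos : 1 ≤ n := by
    rcases L with _ | ⟨a, t⟩
    · simp at hLsum
    · simp [hn]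
  set x : Fin n → ℝ := fun i => L.get i with hx
  have hofn : List.ofFn x = L := List.ofFn_get L
  have hxnn : ∀ i, 0 ≤ x i := fun i => hLnn _ (List.get_mem L i)
  have hxmem : x ∈ {v : Fin n → ℝ | (∀ i, 0 ≤ v i) ∧ 0 < ∑ i, v i} := by
    refine ⟨hxnn, ?_⟩
    have h2 := hLsum
    rw [← hofn, List.sum_ofFn] at h2
    exact h2
  set kk : ℕ → Fin n → ℕ := fun j i => Nat.floor (x i * 2 ^ j) + 1 with hkk
  set v : ℕ → Fin n → ℝ := fun j i => (kk j i : ℝ) / ((2 ^ j : ℕ) : ℝ) with hv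
  have hcast : ∀ j : ℕ, ((2 ^ j : ℕ) : ℝ) = (2:ℝ) ^ j := by intro j; push_cast; ring
  have h2pos : ∀ j : ℕ, (0:ℝ) < (2:ℝ) ^ j := fun j => by positivity
  have hv0 : ∀ j, D (List.ofFn (v j)) = 0 :=
    fun j => hDq n hnpos (kk j) (fun i => Nat.le_add_left 1 _) (2 ^ j) Nat.one_le_two_pow
  have hvmem : ∀ j, v j ∈ {w : Fin n → ℝ | (∀ i, 0 ≤ w i) ∧ 0 < ∑ i, w i} := by
    intro j
    constructor
    · intro i
      rw [hv]
      positivity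
    · apply Finset.sum_pos
      · intro i _
        rw [hv]
        simp only
        apply div_pos
        · have : 1 ≤ kk j i := Nat.le_add_left 1 _
          exact_mod_cast this
        · rw [hcast]; exact h2pos j
      · have : Nonempty (Fin n) := Fin.pos_iff_nonempty.mp (by omega)
        exact Finset.univ_nonempty
  have hvx : Tendsto v atTop (𝓝 x) := by
    rw [tendsto_pi_nhds]
    intro i
    have hlo : ∀ j, x i ≤ v j i := by
      intro j
      have hlt : x i * 2 ^ j < (kk j i : ℝ) := by
        have := Nat.lt_floor_add_one (x i * 2 ^ j)
        rw [hkk]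
        push_cast
        linarith
      rw [hv]
      simp only
      rw [hcast, le_div_iff₀ (h2pos j)]
      linarith
    have hup : ∀ j, v j i ≤ x i + (1/2 : ℝ) ^ j := by
      intro j
      have hfl : (kk j i : ℝ) ≤ x i * 2 ^ j + 1 := by
        have := Nat.floor_le (mul_nonneg (hxnn i) (h2pos j).le)
        rw [hkk]
        push_cast
        linarith
      rw [hv]
      simp only
      rw [hcast, div_le_iff₀ (h2pos j)]
      have hexp : ((1:ℝ)/2) ^ j * (2:ℝ) ^ j = 1 := by
        rw [← mul_pow]
        norm_num
      nlinarith [h2pos j, hxnn i]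
    have hupper : Tendsto (fun j : ℕ => x i + (1/2 : ℝ) ^ j) atTop (𝓝 (x i)) := by
      have := tendsto_const_nhds (x := x i) (f := atTop (α := ℕ)) |>.add
        (tendsto_pow_atTop_nhds_zero_of_lt_one (by norm_num) (by norm_num : (1/2:ℝ) < 1))
      simpa using this
    exact tendsto_of_tendsto_of_tendsto_of_le_of_le tendsto_const_nhds hupper hlo hup
  have cw := (h_cont n) x hxmem
  have hDt : Tendsto (fun j => D (List.ofFn (v j))) atTop (𝓝 (D (List.ofFn x))) := by
    apply cw.tendsto.comp
    rw [tendsto_nhdsWithin_iff]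
    exact ⟨hvx, Eventually.of_forall hvmem⟩
  have hconst : Tendsto (fun j => D (List.ofFn (v j))) atTop (𝓝 (0:ℝ)) :=
    Tendsto.congr (fun j => (hv0 j).symm) tendsto_const_nhds
  have hfin := tendsto_nhds_unique hDt hconst
  rw [hofn] at hfin
  exact hfin

/-- **Characterization of Shannon entropy** (homogeneous form).
`Hhat` is a real-valued function on finite sequences (modelled as lists) of
nonnegative reals with positive sum.  If it is homogeneous, symmetric,
satisfies the 2-cocycle equation, is continuous (for each fixed number of
arguments, on the relevant domain) and `Hhat (1,1) = 2`, then
`Hhat (a₁,…,aₙ) = u a₁ + … + u aₙ - u (a₁+…+aₙ)` where `u x = x·log₂(1/x)`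
(note `x * Real.logb 2 (1/x)` equals `0` at `x = 0`, matching `u 0 = 0`). -/
theorem shannon_entropy_homogeneous_characterization
    (Hhat : List ℝ → ℝ)
    (h_hom : ∀ c : ℝ, 0 < c → ∀ L : List ℝ, (∀ x ∈ L, 0 ≤ x) → 0 < L.sum →
      Hhat (L.map (fun x => c * x)) = c * Hhat L)
    (h_symm : ∀ L M : List ℝ, L.Perm M → (∀ x ∈ L, 0 ≤ x) → 0 < L.sum →
      Hhat L = Hhat M)
    (h_cocycle : ∀ P : List (List ℝ),
      (∀ B ∈ P, (∀ x ∈ B, 0 ≤ x) ∧ 0 < B.sum) →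
      Hhat P.flatten = Hhat (P.map List.sum) + (P.map Hhat).sum)
    (h_cont : ∀ n : ℕ, ContinuousOn (fun v : Fin n → ℝ => Hhat (List.ofFn v))
      {v : Fin n → ℝ | (∀ i, 0 ≤ v i) ∧ 0 < ∑ i, v i})
    (h_norm : Hhat [1, 1] = 2) :
    ∀ L : List ℝ, (∀ x ∈ L, 0 ≤ x) → 0 < L.sum →
      Hhat L = (L.map (fun x => x * Real.logb 2 (1 / x))).sum
        - L.sum * Real.logb 2 (1 / L.sum) := by
  
  intro L hLnn hLsum
  set D : List ℝ → ℝ := fun L => Hhat L - FF L with hD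
  have hDhom : ∀ c : ℝ, 0 < c → ∀ L : List ℝ, (∀ x ∈ L, 0 ≤ x) → 0 < L.sum →
      D (L.map (fun x => c * x)) = c * D L := by
    intro c hc M h1 h2
    simp only [hD]
    rw [h_hom c hc M h1 h2, FF_hom c M]
    ring
  have hDco : ∀ P : List (List ℝ), (∀ B ∈ P, (∀ x ∈ B, 0 ≤ x) ∧ 0 < B.sum) →
      D P.flatten = D (P.map List.sum) + (P.map D).sum := by
    intro P hP
    simp only [hD]
    rw [h_cocycle P hP, FF_cocycle P, list_sum_map_sub' P Hhat FF]
    ring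
  have hDcont : ∀ n : ℕ, ContinuousOn (fun v : Fin n → ℝ => D (List.ofFn v))
      {v : Fin n → ℝ | (∀ i, 0 ≤ v i) ∧ 0 < ∑ i, v i} := by
    intro n
    simp only [hD]
    exact (h_cont n).sub ((FF_cont n).continuousOn)
  have hDnorm : D [1, 1] = 0 := by
    simp only [hD]
    rw [h_norm, FF_norm]
    ring
  have hzero := entropy_aux D hDhom hDco hDcont hDnorm L hLnn hLsum
  simp only [hD] at hzero
  rw [FF_eq_target L]
  linarith
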